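/- If the border rank of the tensor T_{BCLRS,m} is at most r and the border rank of T_{BCLRS,m'} is at most r', then, setting n = m + m' − 1, the border rank of the matrix multiplication tensor M_{⟨n,2,2⟩} is at most r + r'. -/

import Mathlib

/-- A simple (rank-one) tensor in coordinates: `(u ⊗ v ⊗ w)_{ijk} = u_i v_j w_k`. -/
def simpleTensor {ι₁ ι₂ ι₃ : Type} (u : ι₁ → ℂ) (v : ι₂ → ℂ) (w : ι₃ → ℂ) :
    ι₁ → ι₂ → ι₃ → ℂ :=
  fun i j k => u i * v j * w k

/-- The set of tensors of rank at most `r`: sums of `r` simple tensors. -/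
def rankAtMost (ι₁ ι₂ ι₃ : Type) (r : ℕ) : Set (ι₁ → ι₂ → ι₃ → ℂ) :=
  {T | ∃ u : Fin r → ι₁ → ℂ, ∃ v : Fin r → ι₂ → ℂ, ∃ w : Fin r → ι₃ → ℂ,
    T = ∑ s : Fin r, simpleTensor (u s) (v s) (w s)}

/-- The border rank of a tensor: the least `r` such that `T` lies in the closure of the
set of tensors of rank at most `r`. -/
noncomputable def borderRank {ι₁ ι₂ ι₃ : Type} (T : ι₁ → ι₂ → ι₃ → ℂ) : ℕ :=
  sInf {r : ℕ | T ∈ closure (rankAtMost ι₁ ι₂ ι₃ r)}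

/-- The matrix multiplication tensor `M_{⟨n,m,p⟩} = ∑ x^i_j ⊗ y^j_k ⊗ z^k_i`
in coordinates: the first factor is indexed by pairs `(i,j)`, the second by `(j,k)`,
the third by `(k,i)`. -/
def matMulTensor (n m p : ℕ) :
    (Fin n × Fin m) → (Fin m × Fin p) → (Fin p × Fin n) → ℂ :=
  fun x y z => if x.2 = y.1 ∧ y.2 = z.1 ∧ z.2 = x.1 then 1 else 0

/-- The BCLRS tensor `T_{BCLRS,m} = M_{⟨m,2,2⟩} − x^1_1 ⊗ (y^1_1 ⊗ z^1_1 + y^1_2 ⊗ z^2_1)`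
(indices written 1-based in the literature, 0-based here). -/
def TBCLRS (m : ℕ) : (Fin m × Fin 2) → (Fin 2 × Fin 2) → (Fin 2 × Fin m) → ℂ :=
  fun x y z =>
    matMulTensor m 2 2 x y z -
      (if x.1.val = 0 ∧ x.2.val = 0 then 1 else 0) *
        ((if y.1.val = 0 ∧ y.2.val = 0 then 1 else 0) *
            (if z.1.val = 0 ∧ z.2.val = 0 then 1 else 0) +
          (if y.1.val = 0 ∧ y.2.val = 1 then 1 else 0) *
            (if z.1.val = 1 ∧ z.2.val = 0 then 1 else 0))

-- push tensor along partial index maps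
def pushT {ι₁ ι₂ ι₃ κ₁ κ₂ κ₃ : Type}
    (f₁ : ι₁ → Option κ₁) (f₂ : ι₂ → Option κ₂) (f₃ : ι₃ → Option κ₃)
    (T : κ₁ → κ₂ → κ₃ → ℂ) : ι₁ → ι₂ → ι₃ → ℂ :=
  fun a b c =>
    (f₁ a).elim 0 fun a' => (f₂ b).elim 0 fun b' => (f₃ c).elim 0 fun c' => T a' b' c'

lemma pushT_rankAtMost {ι₁ ι₂ ι₃ κ₁ κ₂ κ₃ : Type}
    (f₁ : ι₁ → Option κ₁) (f₂ : ι₂ → Option κ₂) (f₃ : ι₃ → Option κ₃)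
    {r : ℕ} {T : κ₁ → κ₂ → κ₃ → ℂ} (h : T ∈ rankAtMost κ₁ κ₂ κ₃ r) :
    pushT f₁ f₂ f₃ T ∈ rankAtMost ι₁ ι₂ ι₃ r := by
  obtain ⟨u, v, w, rfl⟩ := h
  refine ⟨fun s a => (f₁ a).elim 0 (u s), fun s b => (f₂ b).elim 0 (v s),
    fun s c => (f₃ c).elim 0 (w s), ?_⟩
  funext a b c
  simp only [Finset.sum_apply]
  cases h1 : f₁ a <;> cases h2 : f₂ b <;> cases h3 : f₃ c <;>
    simp [pushT, h1, h2, h3, simpleTensor, Finset.sum_apply]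

lemma continuous_pushT {ι₁ ι₂ ι₃ κ₁ κ₂ κ₃ : Type}
    (f₁ : ι₁ → Option κ₁) (f₂ : ι₂ → Option κ₂) (f₃ : ι₃ → Option κ₃) :
    Continuous (pushT f₁ f₂ f₃ : (κ₁ → κ₂ → κ₃ → ℂ) → (ι₁ → ι₂ → ι₃ → ℂ)) := by
  refine continuous_pi fun a => continuous_pi fun b => continuous_pi fun c => ?_
  cases h1 : f₁ a <;> cases h2 : f₂ b <;> cases h3 : f₃ c <;>
    simp only [pushT, h1, h2, h3, Option.elim] <;>
    first
      | exact continuous_const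
      | exact (continuous_apply _).comp ((continuous_apply _).comp (continuous_apply _))

lemma pushT_mem_closure {ι₁ ι₂ ι₃ κ₁ κ₂ κ₃ : Type}
    (f₁ : ι₁ → Option κ₁) (f₂ : ι₂ → Option κ₂) (f₃ : ι₃ → Option κ₃)
    {r : ℕ} {T : κ₁ → κ₂ → κ₃ → ℂ} (h : T ∈ closure (rankAtMost κ₁ κ₂ κ₃ r)) :
    pushT f₁ f₂ f₃ T ∈ closure (rankAtMost ι₁ ι₂ ι₃ r) := by
  have himg := image_closure_subset_closure_image (continuous_pushT f₁ f₂ f₃)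
    (s := rankAtMost κ₁ κ₂ κ₃ r)
  have hmem : pushT f₁ f₂ f₃ T ∈
      (pushT f₁ f₂ f₃) '' closure (rankAtMost κ₁ κ₂ κ₃ r) := ⟨T, h, rfl⟩
  refine closure_mono ?_ (himg hmem)
  rintro x ⟨y, hy, rfl⟩
  exact pushT_rankAtMost f₁ f₂ f₃ hy

lemma rankAtMost_add {ι₁ ι₂ ι₃ : Type} {r₁ r₂ : ℕ} {T₁ T₂ : ι₁ → ι₂ → ι₃ → ℂ}
    (h₁ : T₁ ∈ rankAtMost ι₁ ι₂ ι₃ r₁) (h₂ : T₂ ∈ rankAtMost ι₁ ι₂ ι₃ r₂) :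
    T₁ + T₂ ∈ rankAtMost ι₁ ι₂ ι₃ (r₁ + r₂) := by
  obtain ⟨u₁, v₁, w₁, rfl⟩ := h₁
  obtain ⟨u₂, v₂, w₂, rfl⟩ := h₂
  refine ⟨Fin.append u₁ u₂, Fin.append v₁ v₂, Fin.append w₁ w₂, ?_⟩
  rw [Fin.sum_univ_add]
  congr 1 <;> exact Finset.sum_congr rfl fun s _ => by
    simp [Fin.append_left, Fin.append_right]

lemma mem_closure_add {ι₁ ι₂ ι₃ : Type} {r₁ r₂ : ℕ} {T₁ T₂ : ι₁ → ι₂ → ι₃ → ℂ}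
    (h₁ : T₁ ∈ closure (rankAtMost ι₁ ι₂ ι₃ r₁))
    (h₂ : T₂ ∈ closure (rankAtMost ι₁ ι₂ ι₃ r₂)) :
    T₁ + T₂ ∈ closure (rankAtMost ι₁ ι₂ ι₃ (r₁ + r₂)) := by
  have hp : (T₁, T₂) ∈ closure ((rankAtMost ι₁ ι₂ ι₃ r₁) ×ˢ (rankAtMost ι₁ ι₂ ι₃ r₂)) := by
    rw [closure_prod_eq]; exact ⟨h₁, h₂⟩
  have hcont : Continuous (fun p : (ι₁ → ι₂ → ι₃ → ℂ) × (ι₁ → ι₂ → ι₃ → ℂ) => p.1 + p.2) :=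
    continuous_fst.add continuous_snd
  have himg := image_closure_subset_closure_image hcont
    (s := (rankAtMost ι₁ ι₂ ι₃ r₁) ×ˢ (rankAtMost ι₁ ι₂ ι₃ r₂))
  have hmem : T₁ + T₂ ∈ (fun p : (ι₁ → ι₂ → ι₃ → ℂ) × _ => p.1 + p.2) ''
      closure ((rankAtMost ι₁ ι₂ ι₃ r₁) ×ˢ (rankAtMost ι₁ ι₂ ι₃ r₂)) := ⟨(T₁, T₂), hp, rfl⟩
  refine closure_mono ?_ (himg hmem)
  rintro x ⟨⟨X, Y⟩, ⟨hX, hY⟩, rfl⟩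
  exact rankAtMost_add hX hY

lemma zero_mem_rankAtMost (ι₁ ι₂ ι₃ : Type) (r : ℕ) :
    (0 : ι₁ → ι₂ → ι₃ → ℂ) ∈ rankAtMost ι₁ ι₂ ι₃ r := by
  refine ⟨0, 0, 0, ?_⟩
  funext a b c
  simp [simpleTensor, Finset.sum_apply]

lemma rankAtMost_mono {ι₁ ι₂ ι₃ : Type} {r₁ r₂ : ℕ} (h : r₁ ≤ r₂) :
    rankAtMost ι₁ ι₂ ι₃ r₁ ⊆ rankAtMost ι₁ ι₂ ι₃ r₂ := by
  intro T hT
  have := rankAtMost_add hT (zero_mem_rankAtMost ι₁ ι₂ ι₃ (r₂ - r₁))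
  rwa [add_zero, Nat.add_sub_cancel' h] at this

lemma exists_mem_rankAtMost {ι₁ ι₂ ι₃ : Type} [Fintype ι₁] [Fintype ι₂] [Fintype ι₃]
    [DecidableEq ι₁] [DecidableEq ι₂] [DecidableEq ι₃] (T : ι₁ → ι₂ → ι₃ → ℂ) :
    T ∈ rankAtMost ι₁ ι₂ ι₃ (Fintype.card (ι₁ × ι₂ × ι₃)) := by
  set e := (Fintype.equivFin (ι₁ × ι₂ × ι₃)).symm
  refine ⟨fun s a => if a = (e s).1 then T (e s).1 (e s).2.1 (e s).2.2 else 0,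
    fun s b => if b = (e s).2.1 then 1 else 0,
    fun s c => if c = (e s).2.2 then 1 else 0, ?_⟩
  funext a b c
  simp only [Finset.sum_apply, simpleTensor]
  rw [← Equiv.sum_comp e.symm (g := fun s =>
    (if a = (e s).1 then T (e s).1 (e s).2.1 (e s).2.2 else 0) *
    (if b = (e s).2.1 then (1:ℂ) else 0) * (if c = (e s).2.2 then (1:ℂ) else 0))]
  simp only [Equiv.apply_symm_apply]
  have : ∀ p : ι₁ × ι₂ × ι₃,
      (if a = p.1 then T p.1 p.2.1 p.2.2 else 0) * (if b = p.2.1 then (1:ℂ) else 0) *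
        (if c = p.2.2 then (1:ℂ) else 0) =
      if (a, b, c) = p then T a b c else 0 := by
    rintro ⟨p1, p2, p3⟩
    by_cases h1 : a = p1 <;> by_cases h2 : b = p2 <;> by_cases h3 : c = p3 <;>
      simp_all [Prod.ext_iff]
  simp only [this]
  simp

lemma mem_closure_of_borderRank_le {ι₁ ι₂ ι₃ : Type} [Fintype ι₁] [Fintype ι₂] [Fintype ι₃]
    [DecidableEq ι₁] [DecidableEq ι₂] [DecidableEq ι₃] {T : ι₁ → ι₂ → ι₃ → ℂ} {r : ℕ}
    (h : borderRank T ≤ r) : T ∈ closure (rankAtMost ι₁ ι₂ ι₃ r) := by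
  have hne : {r : ℕ | T ∈ closure (rankAtMost ι₁ ι₂ ι₃ r)}.Nonempty :=
    ⟨_, subset_closure (exists_mem_rankAtMost T)⟩
  have hmem := Nat.sInf_mem hne
  exact closure_mono (rankAtMost_mono h) hmem

lemma borderRank_le_of_mem_closure {ι₁ ι₂ ι₃ : Type} {T : ι₁ → ι₂ → ι₃ → ℂ} {r : ℕ}
    (h : T ∈ closure (rankAtMost ι₁ ι₂ ι₃ r)) : borderRank T ≤ r :=
  Nat.sInf_le h

lemma TBCLRS_eq (m : ℕ) (x : Fin m × Fin 2) (y : Fin 2 × Fin 2) (z : Fin 2 × Fin m) :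
    TBCLRS m x y z =
      if x.2 = y.1 ∧ y.2 = z.1 ∧ z.2 = x.1 ∧ ¬(x.1.val = 0 ∧ x.2.val = 0) then 1 else 0 := by
  obtain ⟨i, j⟩ := x; obtain ⟨j', k⟩ := y; obtain ⟨k', i'⟩ := z
  simp only [TBCLRS, matMulTensor, Fin.ext_iff]
  split_ifs <;> first | (exfalso; omega) | norm_num

/-- swap on `Fin 2` -/
def sw : Fin 2 → Fin 2 := fun j => ⟨1 - j.val, by omega⟩

/-- restriction maps: kill the first row -/
def res1 (m n : ℕ) : Fin n × Fin 2 → Option (Fin m × Fin 2) :=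
  fun p => if h : p.1.val + 1 < m then some (⟨p.1.val + 1, h⟩, p.2) else none

def res3 (m n : ℕ) : Fin 2 × Fin n → Option (Fin 2 × Fin m) :=
  fun p => if h : p.2.val + 1 < m then some (p.1, ⟨p.2.val + 1, h⟩) else none

lemma restriction_eq (m n : ℕ) (hn : n < m) :
    matMulTensor n 2 2 = pushT (res1 m n) some (res3 m n) (TBCLRS m) := by
  funext x y z
  obtain ⟨I, J⟩ := x; obtain ⟨J', K⟩ := y; obtain ⟨K', I'⟩ := z
  simp only [pushT, res1, res3, Option.elim, TBCLRS_eq, matMulTensor, Fin.ext_iff]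
  split_ifs <;>
    simp_all only [Option.elim, Fin.ext_iff, not_and, not_lt, Fin.isValue] <;>
    (try split_ifs) <;>
    first | rfl | (exfalso; omega) | (simp_all; omega) | simp_all

lemma borderRank_le_of_isEmpty {ι₁ ι₂ ι₃ : Type} [IsEmpty ι₁]
    (T : ι₁ → ι₂ → ι₃ → ℂ) (r : ℕ) : borderRank T ≤ r :=
  Nat.sInf_le (subset_closure ⟨0, 0, 0, funext fun a => (IsEmpty.false a).elim⟩)

/-- first family of gluing maps: identity embedding of rows `[0, m)` -/
def glue1a (m m' : ℕ) : Fin (m + m' - 1) × Fin 2 → Option (Fin m × Fin 2) :=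
  fun p => if h : p.1.val < m then some (⟨p.1.val, h⟩, p.2) else none

def glue1c (m m' : ℕ) : Fin 2 × Fin (m + m' - 1) → Option (Fin 2 × Fin m) :=
  fun p => if h : p.2.val < m then some (p.1, ⟨p.2.val, h⟩) else none

/-- second family: row 0 goes to row 0, row `m + i - 1` to row `i`, columns swapped -/
def glue2a (m m' : ℕ) (hm' : 0 < m') : Fin (m + m' - 1) × Fin 2 → Option (Fin m' × Fin 2) :=
  fun p =>
    if p.1.val = 0 then some (⟨0, hm'⟩, sw p.2)
    else if h : m ≤ p.1.val then
      some (⟨p.1.val - m + 1, by have := p.1.isLt; omega⟩, sw p.2)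
    else none

def glue2b : Fin 2 × Fin 2 → Option (Fin 2 × Fin 2) := fun p => some (sw p.1, p.2)

def glue2c (m m' : ℕ) (hm' : 0 < m') : Fin 2 × Fin (m + m' - 1) → Option (Fin 2 × Fin m') :=
  fun p =>
    if p.2.val = 0 then some (p.1, ⟨0, hm'⟩)
    else if h : m ≤ p.2.val then
      some (p.1, ⟨p.2.val - m + 1, by have := p.2.isLt; omega⟩)
    else none


lemma evalA (m m' : ℕ) (I : Fin (m + m' - 1)) (J J' K K' : Fin 2) (I' : Fin (m + m' - 1)) :
    pushT (glue1a m m') some (glue1c m m') (TBCLRS m) (I, J) (J', K) (K', I') =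
      if J = J' ∧ K = K' ∧ I' = I ∧ I.val < m ∧ ¬(I.val = 0 ∧ J.val = 0) then 1 else 0 := by
  simp only [pushT, glue1a, glue1c, Option.elim, TBCLRS_eq]
  split_ifs <;>
    simp_all only [Option.elim, Fin.ext_iff, not_and, not_lt, Fin.isValue] <;>
    (try split_ifs) <;>
    first | rfl | (exfalso; omega) | (simp_all; omega) | simp_all

lemma evalB (m m' : ℕ) (hm' : 0 < m') (I : Fin (m + m' - 1)) (J J' K K' : Fin 2)
    (I' : Fin (m + m' - 1)) :
    pushT (glue2a m m' hm') glue2b (glue2c m m' hm') (TBCLRS m') (I, J) (J', K) (K', I') =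
      if J = J' ∧ K = K' ∧ I' = I ∧ (I.val = 0 ∨ m ≤ I.val) ∧ ¬(I.val = 0 ∧ J.val = 1)
        then 1 else 0 := by
  simp only [pushT, glue2a, glue2b, glue2c, sw, Option.elim, TBCLRS_eq]
  split_ifs <;>
    simp_all only [Option.elim, Fin.ext_iff, not_and, not_lt, not_or, Fin.isValue] <;>
    (try split_ifs) <;>
    first | rfl | (exfalso; omega) | (simp_all; omega) | simp_all

lemma key (m m' : ℕ) (hm : 0 < m) (hm' : 0 < m') :
    matMulTensor (m + m' - 1) 2 2 =
      pushT (glue1a m m') some (glue1c m m') (TBCLRS m) +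
        pushT (glue2a m m' hm') glue2b (glue2c m m' hm') (TBCLRS m') := by
  funext x y z
  obtain ⟨I, J⟩ := x; obtain ⟨J', K⟩ := y; obtain ⟨K', I'⟩ := z
  rw [Pi.add_apply, Pi.add_apply, Pi.add_apply, evalA, evalB]
  have hI := I.isLt
  simp only [matMulTensor, Fin.ext_iff]
  split_ifs <;> first | (exfalso; omega) | norm_num


/-- If `R̲(T_{BCLRS,m}) ≤ r` and `R̲(T_{BCLRS,m'}) ≤ r'`, then with `n = m + m' - 1`,
`R̲(M_{⟨n,2,2⟩}) ≤ r + r'`. -/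
theorem borderRank_matMul_le_of_BCLRS (m m' r r' : ℕ)
    (h : borderRank (TBCLRS m) ≤ r) (h' : borderRank (TBCLRS m') ≤ r') :
    borderRank (matMulTensor (m + m' - 1) 2 2) ≤ r + r' := by
  have h1 : TBCLRS m ∈ closure (rankAtMost _ _ _ r) := mem_closure_of_borderRank_le h
  have h2 : TBCLRS m' ∈ closure (rankAtMost _ _ _ r') := mem_closure_of_borderRank_le h'
  rcases Nat.eq_zero_or_pos m with hm | hm
  · rcases Nat.eq_zero_or_pos m' with hm' | hm'
    · subst hm; subst hm'
      haveI : IsEmpty (Fin (0 + 0 - 1)) := ⟨fun i => absurd i.isLt (by omega)⟩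
      exact borderRank_le_of_isEmpty _ _
    · refine le_trans (borderRank_le_of_mem_closure ?_) (Nat.le_add_left r' r)
      rw [restriction_eq m' (m + m' - 1) (by omega)]
      exact pushT_mem_closure _ _ _ h2
  rcases Nat.eq_zero_or_pos m' with hm' | hm'
  · refine le_trans (borderRank_le_of_mem_closure ?_) (Nat.le_add_right r r')
    rw [restriction_eq m (m + m' - 1) (by omega)]
    exact pushT_mem_closure _ _ _ h1
  · rw [key m m' hm hm']
    exact borderRank_le_of_mem_closure
      (mem_closure_add (pushT_mem_closure _ _ _ h1) (pushT_mem_closure _ _ _ h2))
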